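/- Let A, P be n×n real matrices with P symmetric positive definite, and S a k×n real matrix. Then −P + AᵀPA + SᵀS ≤ 0 if and only if the symmetric block matrix [[−P⁻¹ + AP⁻¹Aᵀ, −AP⁻¹Sᵀ], [−SP⁻¹Aᵀ, −I_k + SP⁻¹Sᵀ]] is negative semidefinite. -/

import Mathlib

open Matrix Real

section Aux

variable {m : ℕ}

lemma dp_transpose {p q : ℕ} (M : Matrix (Fin p) (Fin q) ℝ) (x : Fin q → ℝ) (w : Fin p → ℝ) :
    x ⬝ᵥ Mᵀ *ᵥ w = (M *ᵥ x) ⬝ᵥ w := by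
  rw [dotProduct_mulVec, vecMul_transpose]

/-- Cauchy–Schwarz for a positive semidefinite real matrix. -/
lemma cs_psd {Q : Matrix (Fin m) (Fin m) ℝ} (hQ : Q.PosSemidef) (x y : Fin m → ℝ) :
    x ⬝ᵥ Q *ᵥ y ≤ Real.sqrt (x ⬝ᵥ Q *ᵥ x) * Real.sqrt (y ⬝ᵥ Q *ᵥ y) := by
  have hsymm : ∀ a b : Fin m → ℝ, a ⬝ᵥ Q *ᵥ b = b ⬝ᵥ Q *ᵥ a := by
    intro a b
    have hQt : Qᵀ = Q := by
      have := hQ.1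
      exact Matrix.isHermitian_iff_isSymm.mp this
    have h1 : a ⬝ᵥ Q *ᵥ b = (Q *ᵥ a) ⬝ᵥ b := by
      conv_lhs => rw [← hQt, dp_transpose]
    rw [h1, dotProduct_comm]
  have key : ∀ t : ℝ, 0 ≤ (y ⬝ᵥ Q *ᵥ y) * (t * t) + (2 * (x ⬝ᵥ Q *ᵥ y)) * t + (x ⬝ᵥ Q *ᵥ x) := by
    intro t
    have h := hQ.dotProduct_mulVec_nonneg (x + t • y)
    simp only [star_trivial, mulVec_add, mulVec_smul, dotProduct_add, add_dotProduct,
      dotProduct_smul, smul_dotProduct, smul_eq_mul] at h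
    rw [hsymm y x] at h
    ring_nf at h ⊢
    linarith
  have hd := discrim_le_zero key
  have hxx : 0 ≤ x ⬝ᵥ Q *ᵥ x := by simpa using hQ.dotProduct_mulVec_nonneg x
  have hyy : 0 ≤ y ⬝ᵥ Q *ᵥ y := by simpa using hQ.dotProduct_mulVec_nonneg y
  unfold discrim at hd
  nlinarith [Real.sq_sqrt hxx, Real.sq_sqrt hyy, Real.sqrt_nonneg (x ⬝ᵥ Q *ᵥ x),
    Real.sqrt_nonneg (y ⬝ᵥ Q *ᵥ y), sq_nonneg (Real.sqrt (x ⬝ᵥ Q *ᵥ x) * Real.sqrt (y ⬝ᵥ Q *ᵥ y) - x ⬝ᵥ Q *ᵥ y),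
    mul_nonneg (Real.sqrt_nonneg (x ⬝ᵥ Q *ᵥ x)) (Real.sqrt_nonneg (y ⬝ᵥ Q *ᵥ y))]

lemma two_cs {a b c d : ℝ} (ha : 0 ≤ a) (hb : 0 ≤ b) (hc : 0 ≤ c) (hd : 0 ≤ d) :
    Real.sqrt a * Real.sqrt b + Real.sqrt c * Real.sqrt d ≤ Real.sqrt (a + c) * Real.sqrt (b + d) := by
  have hs : 0 ≤ Real.sqrt a * Real.sqrt b + Real.sqrt c * Real.sqrt d := by positivity
  have ht : 0 ≤ Real.sqrt (a + c) * Real.sqrt (b + d) := by positivity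
  have h2 : (Real.sqrt a * Real.sqrt b + Real.sqrt c * Real.sqrt d) ^ 2 ≤
      (Real.sqrt (a + c) * Real.sqrt (b + d)) ^ 2 := by
    nlinarith [Real.sq_sqrt ha, Real.sq_sqrt hb, Real.sq_sqrt hc, Real.sq_sqrt hd,
      Real.sq_sqrt (add_nonneg ha hc), Real.sq_sqrt (add_nonneg hb hd),
      Real.sqrt_nonneg a, Real.sqrt_nonneg b, Real.sqrt_nonneg c, Real.sqrt_nonneg d,
      sq_nonneg (Real.sqrt a * Real.sqrt d - Real.sqrt c * Real.sqrt b)]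
  calc Real.sqrt a * Real.sqrt b + Real.sqrt c * Real.sqrt d
      = Real.sqrt ((Real.sqrt a * Real.sqrt b + Real.sqrt c * Real.sqrt d) ^ 2) := (Real.sqrt_sq hs).symm
    _ ≤ Real.sqrt ((Real.sqrt (a + c) * Real.sqrt (b + d)) ^ 2) := Real.sqrt_le_sqrt h2
    _ = _ := Real.sqrt_sq ht

lemma le_of_le_sqrt_mul {L M : ℝ} (hL : 0 ≤ L) (hM : 0 ≤ M)
    (h : L ≤ Real.sqrt M * Real.sqrt L) : L ≤ M := by
  nlinarith [Real.sq_sqrt hL, Real.sq_sqrt hM, sq_nonneg (Real.sqrt L - Real.sqrt M)]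


lemma dp_transpose' {p q : ℕ} (M : Matrix (Fin p) (Fin q) ℝ) (x : Fin p → ℝ) (w : Fin q → ℝ) :
    x ⬝ᵥ M *ᵥ w = (Mᵀ *ᵥ x) ⬝ᵥ w := by
  rw [← Matrix.transpose_transpose M, dp_transpose, Matrix.transpose_transpose]

lemma sandwich {n p q : ℕ} (M : Matrix (Fin p) (Fin n) ℝ) (B : Matrix (Fin n) (Fin n) ℝ)
    (N : Matrix (Fin q) (Fin n) ℝ) (w1 : Fin p → ℝ) (w2 : Fin q → ℝ) :
    w1 ⬝ᵥ (M * B * Nᵀ) *ᵥ w2 = (Mᵀ *ᵥ w1) ⬝ᵥ B *ᵥ (Nᵀ *ᵥ w2) := by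
  rw [Matrix.mul_assoc, ← Matrix.mulVec_mulVec, ← Matrix.mulVec_mulVec, dp_transpose']

lemma sandwichT {n p q : ℕ} (M : Matrix (Fin n) (Fin p) ℝ) (B : Matrix (Fin n) (Fin n) ℝ)
    (N : Matrix (Fin n) (Fin q) ℝ) (w1 : Fin p → ℝ) (w2 : Fin q → ℝ) :
    w1 ⬝ᵥ (Mᵀ * B * N) *ᵥ w2 = (M *ᵥ w1) ⬝ᵥ B *ᵥ (N *ᵥ w2) := by
  rw [Matrix.mul_assoc, ← Matrix.mulVec_mulVec, ← Matrix.mulVec_mulVec, dp_transpose]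

lemma dpself {p : ℕ} (z : Fin p → ℝ) : 0 ≤ z ⬝ᵥ z :=
  Finset.sum_nonneg fun i _ => mul_self_nonneg _

lemma psd_one {p : ℕ} : (1 : Matrix (Fin p) (Fin p) ℝ).PosSemidef :=
  Matrix.PosSemidef.of_dotProduct_mulVec_nonneg Matrix.isHermitian_one fun x => by simpa using dpself x

end Aux

theorem stmt2 {n k : ℕ} (A P : Matrix (Fin n) (Fin n) ℝ)
    (S : Matrix (Fin k) (Fin n) ℝ) (hP : P.PosDef) :
    (∀ x : Fin n → ℝ, x ⬝ᵥ ((-P + Aᵀ * P * A + Sᵀ * S) *ᵥ x) ≤ 0) ↔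
    (∀ v : Fin n ⊕ Fin k → ℝ,
      v ⬝ᵥ ((Matrix.fromBlocks (-P⁻¹ + A * P⁻¹ * Aᵀ) (-(A * P⁻¹ * Sᵀ))
        (-(S * P⁻¹ * Aᵀ)) (-(1 : Matrix (Fin k) (Fin k) ℝ) + S * P⁻¹ * Sᵀ)) *ᵥ v) ≤ 0) := by
  have hPi : P⁻¹.PosDef := hP.inv
  have hPs : P.PosSemidef := hP.posSemidef
  have hPis : P⁻¹.PosSemidef := hPi.posSemidef
  have hdet : IsUnit P.det := isUnit_iff_ne_zero.mpr hP.det_pos.ne'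
  have hPP : P * P⁻¹ = 1 := mul_nonsing_inv P hdet
  have hPPi : P⁻¹ * P = 1 := nonsing_inv_mul P hdet
  have hcan1 : ∀ w : Fin n → ℝ, P *ᵥ (P⁻¹ *ᵥ w) = w := by
    intro w; rw [mulVec_mulVec, hPP, one_mulVec]
  have hcan2 : ∀ w : Fin n → ℝ, P⁻¹ *ᵥ (P *ᵥ w) = w := by
    intro w; rw [mulVec_mulVec, hPPi, one_mulVec]
  -- expansion of the first quadratic form
  have hexp1 : ∀ x : Fin n → ℝ, x ⬝ᵥ ((-P + Aᵀ * P * A + Sᵀ * S) *ᵥ x) =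
      (A *ᵥ x) ⬝ᵥ P *ᵥ (A *ᵥ x) + (S *ᵥ x) ⬝ᵥ (S *ᵥ x) - x ⬝ᵥ P *ᵥ x := by
    intro x
    rw [add_mulVec, add_mulVec, neg_mulVec, dotProduct_add, dotProduct_add, dotProduct_neg,
      sandwichT A P A x x, ← mulVec_mulVec, dp_transpose]
    ring
  -- expansion of the second quadratic form
  have hexp2 : ∀ (y : Fin n → ℝ) (z : Fin k → ℝ),
      (Sum.elim y z) ⬝ᵥ ((Matrix.fromBlocks (-P⁻¹ + A * P⁻¹ * Aᵀ) (-(A * P⁻¹ * Sᵀ))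
        (-(S * P⁻¹ * Aᵀ)) (-(1 : Matrix (Fin k) (Fin k) ℝ) + S * P⁻¹ * Sᵀ)) *ᵥ (Sum.elim y z)) =
      (Aᵀ *ᵥ y - Sᵀ *ᵥ z) ⬝ᵥ P⁻¹ *ᵥ (Aᵀ *ᵥ y - Sᵀ *ᵥ z) - y ⬝ᵥ P⁻¹ *ᵥ y - z ⬝ᵥ z := by
    intro y z
    rw [fromBlocks_mulVec, sumElim_dotProduct_sumElim]
    simp only [Sum.elim_comp_inl, Sum.elim_comp_inr, add_mulVec, neg_mulVec, dotProduct_add,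
      dotProduct_neg, one_mulVec, mulVec_sub, dotProduct_sub, sub_dotProduct]
    rw [sandwich A P⁻¹ A y y, sandwich A P⁻¹ S y z, sandwich S P⁻¹ A z y, sandwich S P⁻¹ S z z]
    ring
  constructor
  · -- forward direction
    intro h1 v
    have hv : v = Sum.elim (v ∘ Sum.inl) (v ∘ Sum.inr) := (Sum.elim_comp_inl_inr v).symm
    set y := v ∘ Sum.inl
    set z := v ∘ Sum.inr
    rw [hv, hexp2 y z]
    set u : Fin n → ℝ := Aᵀ *ᵥ y - Sᵀ *ᵥ z with hu
    set x : Fin n → ℝ := P⁻¹ *ᵥ u with hx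
    set L : ℝ := u ⬝ᵥ P⁻¹ *ᵥ u with hLdef
    set b : ℝ := y ⬝ᵥ P⁻¹ *ᵥ y with hbdef
    set d : ℝ := z ⬝ᵥ z with hddef
    have hL0 : 0 ≤ L := by simpa only [star_trivial] using hPis.dotProduct_mulVec_nonneg u
    have hb0 : 0 ≤ b := by simpa only [star_trivial] using hPis.dotProduct_mulVec_nonneg y
    have hd0 : 0 ≤ d := dpself z
    set a : ℝ := (A *ᵥ x) ⬝ᵥ P *ᵥ (A *ᵥ x) with hadef
    set c : ℝ := (S *ᵥ x) ⬝ᵥ (S *ᵥ x) with hcdef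
    have ha0 : 0 ≤ a := by simpa only [star_trivial] using hPs.dotProduct_mulVec_nonneg (A *ᵥ x)
    have hc0 : 0 ≤ c := dpself _
    have hxPx : x ⬝ᵥ P *ᵥ x = L := by
      rw [hx, hcan1, dotProduct_comm]
    have hac : a + c ≤ L := by
      have := h1 x
      rw [hexp1 x, hxPx] at this
      linarith
    have hLsplit : L = (A *ᵥ x) ⬝ᵥ y + (S *ᵥ x) ⬝ᵥ (-z) := by
      have h1' : L = u ⬝ᵥ x := by rw [hLdef, hx]
      rw [h1', dotProduct_comm, hu, dotProduct_sub, dp_transpose, dp_transpose, dotProduct_neg]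
      ring
    have cs1 : (A *ᵥ x) ⬝ᵥ y ≤ Real.sqrt a * Real.sqrt b := by
      have h1' : (A *ᵥ x) ⬝ᵥ y = (A *ᵥ x) ⬝ᵥ P *ᵥ (P⁻¹ *ᵥ y) := by rw [hcan1]
      have h2' : (P⁻¹ *ᵥ y) ⬝ᵥ P *ᵥ (P⁻¹ *ᵥ y) = b := by
        rw [hcan1, dotProduct_comm]
      calc (A *ᵥ x) ⬝ᵥ y = (A *ᵥ x) ⬝ᵥ P *ᵥ (P⁻¹ *ᵥ y) := h1'
        _ ≤ Real.sqrt ((A *ᵥ x) ⬝ᵥ P *ᵥ (A *ᵥ x)) * Real.sqrt ((P⁻¹ *ᵥ y) ⬝ᵥ P *ᵥ (P⁻¹ *ᵥ y)) :=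
            cs_psd hPs _ _
        _ = Real.sqrt a * Real.sqrt b := by rw [h2', hadef]
    have cs2 : (S *ᵥ x) ⬝ᵥ (-z) ≤ Real.sqrt c * Real.sqrt d := by
      have := cs_psd (psd_one (p := k)) (S *ᵥ x) (-z)
      simpa [one_mulVec, dotProduct_neg, neg_dotProduct] using this
    have hcomb : L ≤ Real.sqrt (a + c) * Real.sqrt (b + d) := by
      calc L = (A *ᵥ x) ⬝ᵥ y + (S *ᵥ x) ⬝ᵥ (-z) := hLsplit
        _ ≤ Real.sqrt a * Real.sqrt b + Real.sqrt c * Real.sqrt d := add_le_add cs1 cs2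
        _ ≤ Real.sqrt (a + c) * Real.sqrt (b + d) := two_cs ha0 hb0 hc0 hd0
    have hfin : L ≤ Real.sqrt (b + d) * Real.sqrt L := by
      calc L ≤ Real.sqrt (a + c) * Real.sqrt (b + d) := hcomb
        _ ≤ Real.sqrt L * Real.sqrt (b + d) :=
            mul_le_mul_of_nonneg_right (Real.sqrt_le_sqrt hac) (Real.sqrt_nonneg _)
        _ = Real.sqrt (b + d) * Real.sqrt L := mul_comm _ _
    have := le_of_le_sqrt_mul hL0 (add_nonneg hb0 hd0) hfin
    linarith
  · -- backward direction
    intro h2 x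
    rw [hexp1 x]
    set a : ℝ := (A *ᵥ x) ⬝ᵥ P *ᵥ (A *ᵥ x) with hadef
    set c : ℝ := (S *ᵥ x) ⬝ᵥ (S *ᵥ x) with hcdef
    have ha0 : 0 ≤ a := by simpa only [star_trivial] using hPs.dotProduct_mulVec_nonneg (A *ᵥ x)
    have hc0 : 0 ≤ c := dpself _
    have hM0 : 0 ≤ x ⬝ᵥ P *ᵥ x := by simpa only [star_trivial] using hPs.dotProduct_mulVec_nonneg x
    set y : Fin n → ℝ := P *ᵥ (A *ᵥ x) with hy
    set z : Fin k → ℝ := -(S *ᵥ x) with hz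
    set u : Fin n → ℝ := Aᵀ *ᵥ y - Sᵀ *ᵥ z with hu
    have hyy : y ⬝ᵥ P⁻¹ *ᵥ y = a := by
      rw [hy, hcan2, dotProduct_comm]
    have hzz : z ⬝ᵥ z = c := by
      rw [hz]; simp [neg_dotProduct, dotProduct_neg, hcdef]
    have huu : u ⬝ᵥ P⁻¹ *ᵥ u ≤ a + c := by
      have := h2 (Sum.elim y z)
      rw [hexp2 y z, hyy, hzz] at this
      linarith
    have hxu : x ⬝ᵥ u = a + c := by
      rw [hu, dotProduct_sub, dp_transpose, dp_transpose, hy, hz, dotProduct_neg]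
      ring
    have huu0 : 0 ≤ u ⬝ᵥ P⁻¹ *ᵥ u := by simpa only [star_trivial] using hPis.dotProduct_mulVec_nonneg u
    have hcs : a + c ≤ Real.sqrt (x ⬝ᵥ P *ᵥ x) * Real.sqrt (u ⬝ᵥ P⁻¹ *ᵥ u) := by
      have h1' : x ⬝ᵥ u = x ⬝ᵥ P *ᵥ (P⁻¹ *ᵥ u) := by rw [hcan1]
      have h2' : (P⁻¹ *ᵥ u) ⬝ᵥ P *ᵥ (P⁻¹ *ᵥ u) = u ⬝ᵥ P⁻¹ *ᵥ u := by
        rw [hcan1, dotProduct_comm]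
      calc a + c = x ⬝ᵥ P *ᵥ (P⁻¹ *ᵥ u) := by rw [← h1', hxu]
        _ ≤ Real.sqrt (x ⬝ᵥ P *ᵥ x) * Real.sqrt ((P⁻¹ *ᵥ u) ⬝ᵥ P *ᵥ (P⁻¹ *ᵥ u)) := cs_psd hPs _ _
        _ = Real.sqrt (x ⬝ᵥ P *ᵥ x) * Real.sqrt (u ⬝ᵥ P⁻¹ *ᵥ u) := by rw [h2']
    have hfin : a + c ≤ Real.sqrt (x ⬝ᵥ P *ᵥ x) * Real.sqrt (a + c) := by
      calc a + c ≤ Real.sqrt (x ⬝ᵥ P *ᵥ x) * Real.sqrt (u ⬝ᵥ P⁻¹ *ᵥ u) := hcs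
        _ ≤ Real.sqrt (x ⬝ᵥ P *ᵥ x) * Real.sqrt (a + c) :=
            mul_le_mul_of_nonneg_left (Real.sqrt_le_sqrt huu) (Real.sqrt_nonneg _)
    have := le_of_le_sqrt_mul (add_nonneg ha0 hc0) hM0 hfin
    linarith
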